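/- Fix an integer base b ≥ 2 and N ≥ 1, and let (U_n) be a Lucas sequence of the first kind with parameters (P, 1) (i.e., Q = 1) satisfying P² − 4 > 0 and U_n > 0 and strictly increasing for all sufficiently large n. Then there exists a threshold m_* such that for all m ≥ m_*, there are no integers k ≥ 1, 1 ≤ t ≤ N, 0 ≤ r < b^t with U_{m+k} = b^t·U_m + r. That is, when Q = 1, no digit-appending step is possible from any sufficiently large term of the sequence. -/

import Mathlib

set_option maxHeartbeats 1000000

private def Vseq (P : ℤ) : ℕ → ℤ
  | 0 => 2
  | 1 => P
  | (n+2) => P * Vseq P (n+1) - Vseq P n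

theorem lucas_Q_one_no_step (b N : ℕ) (hb : 2 ≤ b) (hN : 1 ≤ N)
    (P : ℤ) (U : ℕ → ℤ)
    (hU0 : U 0 = 0) (hU1 : U 1 = 1)
    (hU : ∀ n : ℕ, U (n + 2) = P * U (n + 1) - U n)
    (hD : 0 < P ^ 2 - 4)
    (hpos : ∃ n₀ : ℕ, ∀ n : ℕ, n₀ ≤ n → 0 < U n ∧ U n < U (n + 1)) :
    ∃ mstar : ℕ, ∀ m : ℕ, mstar ≤ m →
      ¬ ∃ (k t r : ℕ), 1 ≤ k ∧ 1 ≤ t ∧ t ≤ N ∧ r < b ^ t ∧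
        U (m + k) = (b : ℤ) ^ t * U m + (r : ℤ) := by
  obtain ⟨n₀, hpos⟩ := hpos
  -- strict monotonicity chain
  have mono : ∀ a c : ℕ, n₀ ≤ a → a < c → U a < U c := by
    intro a c ha hac
    induction c with
    | zero => omega
    | succ c ih =>
      rcases Nat.lt_succ_iff_lt_or_eq.mp hac with h | h
      · exact lt_trans (ih h) (hpos c (by omega)).2
      · subst h; exact (hpos a ha).2
  have mono' : ∀ a c : ℕ, n₀ ≤ a → a ≤ c → U a ≤ U c := by
    intro a c ha hac
    rcases Nat.lt_or_ge a c with h | h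
    · exact le_of_lt (mono a c ha h)
    · have : a = c := by omega
      subst this; rfl
  -- P ≥ 3
  have hP3 : 3 ≤ P := by
    have h0 := hpos n₀ le_rfl
    have h1 := hpos (n₀+1) (by omega)
    have h2 := hU n₀
    have hP2 : 2 ≤ P := by nlinarith [h0.1, h0.2, h1.1, h1.2]
    rcases eq_or_lt_of_le hP2 with h | h
    · exfalso; rw [← h] at hD; norm_num at hD
    · omega
  -- doubling
  have hdouble : ∀ n : ℕ, n₀ + 1 ≤ n → 2 * U n ≤ U (n + 1) := by
    intro n hn
    obtain ⟨n', rfl⟩ : ∃ n', n = n' + 1 := ⟨n - 1, by omega⟩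
    have h2 := hU n'
    have h1 := hpos n' (by omega)
    have h3 := (hpos (n'+1) (by omega)).1
    nlinarith [h1.1, h1.2, mul_nonneg (by linarith : (0:ℤ) ≤ P - 3) (le_of_lt h3)]
  -- exponential growth
  have hgrow : ∀ j n : ℕ, n₀ + 1 ≤ n → 2 ^ j * U n ≤ U (n + j) := by
    intro j
    induction j with
    | zero => intro n _; simp
    | succ j ih =>
      intro n hn
      have h1 := ih n hn
      have h2 := hdouble (n + j) (by omega)
      calc (2:ℤ) ^ (j+1) * U n = 2 * (2 ^ j * U n) := by ring
        _ ≤ 2 * U (n + j) := by linarith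
        _ ≤ U (n + j + 1) := h2
  -- Vseq identity
  have hVid : ∀ k m : ℕ, k ≤ m → U (m + k) = Vseq P k * U m - U (m - k) := by
    intro k
    induction k using Nat.twoStepInduction with
    | zero => intro m _; simp [Vseq]; ring
    | one =>
      intro m hm
      obtain ⟨m', rfl⟩ : ∃ m', m = m' + 1 := ⟨m - 1, by omega⟩
      simpa [Vseq] using hU m'
    | more k ih1 ih2 =>
      intro m hm
      have e1 := ih1 m (by omega)
      have e2 := ih2 m (by omega)
      have e3 := hU (m + k)
      have e4 := hU (m - k - 2)
      have h1 : m - k - 2 + 2 = m - k := by omega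
      have h2 : m - k - 2 + 1 = m - (k+1) := by omega
      have h3 : m - (k+2) = m - k - 2 := by omega
      rw [h1, h2] at e4
      have hV2 : Vseq P (k+2) = P * Vseq P (k+1) - Vseq P k := rfl
      have hm2 : m + (k+2) = (m + k) + 2 := by omega
      have hm3 : m + k + 1 = m + (k + 1) := by omega
      rw [hm2, e3, hm3, e2, e1, h3, hV2]
      linear_combination e4
  obtain ⟨A, hA⟩ : ∃ A : ℕ, b * N = A := ⟨_, rfl⟩
  -- b^N < 2^(2A)
  have hbN : (b:ℤ) ^ N < 2 ^ (2 * A) := by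
    have h1 : b < 2 ^ b := Nat.lt_two_pow_self
    have h2 : b ^ N < (2 ^ b) ^ N := Nat.pow_lt_pow_left h1 (by omega)
    have h3 : (2:ℕ) ^ (b * N) ≤ 2 ^ (2 * A) :=
      Nat.pow_le_pow_right (by omega) (by omega)
    have : b ^ N < 2 ^ (2 * A) := by
      calc b ^ N < (2 ^ b) ^ N := h2
        _ = 2 ^ (b * N) := by rw [← pow_mul]
        _ ≤ 2 ^ (2 * A) := h3
    exact_mod_cast this
  refine ⟨n₀ + 4 * (b * N) + 3, ?_⟩
  rintro m hm ⟨k, t, r, hk, ht1, htN, hr, heq⟩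
  rw [hA] at hm
  have hmn : n₀ + 1 ≤ m := by omega
  have hUm : 0 < U m := (hpos m (by omega)).1
  have hbt : ((b:ℤ)) ^ t ≤ (b:ℤ) ^ N :=
    pow_le_pow_right₀ (by exact_mod_cast (by omega : 1 ≤ b)) htN
  have hrN : (r:ℤ) < (b:ℤ) ^ N := lt_of_lt_of_le (by exact_mod_cast hr) hbt
  have hr0 : (0:ℤ) ≤ (r:ℤ) := Int.natCast_nonneg r
  -- bound k : 2^k * U m ≤ U(m+k) = b^t U m + r < 2 b^N U m ≤ 2^(2bN+1) U m
  have hk1 : (2:ℤ) ^ k * U m ≤ U (m + k) := hgrow k m hmn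
  have hUm1 : (1:ℤ) ≤ U m := hUm
  have hkbig : (2:ℤ) ^ k * U m < 2 ^ (2 * A + 1) * U m := by
    have h5 : (b:ℤ) ^ N ≤ (b:ℤ) ^ N * U m := le_mul_of_one_le_right (by positivity) hUm1
    have h6 : U (m + k) < 2 * ((b:ℤ) ^ N * U m) := by
      rw [heq]
      have : (b:ℤ) ^ t * U m ≤ (b:ℤ) ^ N * U m :=
        mul_le_mul_of_nonneg_right hbt (le_of_lt hUm)
      linarith
    have h7 : 2 * ((b:ℤ) ^ N * U m) ≤ 2 ^ (2 * A + 1) * U m := by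
      have : (2:ℤ) * (b:ℤ) ^ N ≤ 2 * 2 ^ (2 * A) := by linarith
      calc 2 * ((b:ℤ) ^ N * U m) = (2 * (b:ℤ) ^ N) * U m := by ring
        _ ≤ (2 * 2 ^ (2 * A)) * U m :=
            mul_le_mul_of_nonneg_right this (le_of_lt hUm)
        _ = 2 ^ (2 * A + 1) * U m := by ring
    linarith
  have hkexp : (2:ℤ) ^ k < 2 ^ (2 * A + 1) :=
    lt_of_mul_lt_mul_right hkbig (le_of_lt hUm)
  have hkle : k ≤ 2 * A := by
    by_contra h
    push_neg at h
    have : (2:ℤ) ^ (2 * A + 1) ≤ 2 ^ k := pow_le_pow_right₀ (by norm_num) h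
    linarith
  have hkm : k ≤ m := by omega
  have hmk : n₀ + 1 ≤ m - k := by omega
  have hUmk : 0 < U (m - k) := (hpos (m - k) (by omega)).1
  have hUmklt : U (m - k) < U m := mono (m - k) m (by omega) (by omega)
  -- U (m-1) > b^N
  have hUm1big : (b:ℤ) ^ N < U (m - 1) := by
    have hg := hgrow (m - 1 - (n₀ + 1)) (n₀ + 1) le_rfl
    have he : n₀ + 1 + (m - 1 - (n₀ + 1)) = m - 1 := by omega
    rw [he] at hg
    have hU1' : (1:ℤ) ≤ U (n₀ + 1) := (hpos (n₀+1) (by omega)).1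
    have hp : (2:ℤ) ^ (2 * A) ≤ 2 ^ (m - 1 - (n₀ + 1)) :=
      pow_le_pow_right₀ (by norm_num) (by omega)
    nlinarith [pow_pos (by norm_num : (0:ℤ) < 2) (m - 1 - (n₀ + 1))]
  have hUmm1 : 2 * U (m - 1) ≤ U m := by
    have := hdouble (m - 1) (by omega)
    have he : m - 1 + 1 = m := by omega
    rwa [he] at this
  have hUmkle : U (m - k) ≤ U (m - 1) := mono' (m - k) (m - 1) (by omega) (by omega)
  -- the key identity
  have hid := hVid k m hkm
  set c : ℤ := Vseq P k - (b:ℤ) ^ t with hc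
  have hcid : c * U m = (r:ℤ) + U (m - k) := by
    rw [hc]; rw [hid] at heq; linarith
  have hprod : 0 < c * U m := by rw [hcid]; linarith
  have hc1 : 0 < c := by
    by_contra h
    push_neg at h
    have := mul_nonpos_of_nonpos_of_nonneg h (le_of_lt hUm)
    linarith
  have hc2 : c < 2 := by
    have : c * U m < 2 * U m := by
      have hrm : (r:ℤ) < U m := by linarith
      linarith
    exact lt_of_mul_lt_mul_right this (le_of_lt hUm)
  have hceq : c = 1 := by omega
  rw [hceq, one_mul] at hcid
  -- r = U m - U (m-k) ≥ U (m-1) > b^N > r, contradiction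
  linarith
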